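/- In the setting of the previous statement, let r be the maximal total degree of monomials in O and let Λ = (ker P)^⊥ be the n-dimensional space of interpolation conditions (n = #O = dim V). Then there is no n-dimensional subspace V' of Π_{r−1} (polynomials of total degree ≤ r−1) for which the interpolation problem with conditions Λ is poised, i.e., for which Π_{r−1} ⊇ V' satisfies V' ∩ ker Λ = {0} and dim V' = n. Hence V is a minimal degree interpolation space for Λ. -/

import Mathlib

open MvPolynomial

/-- `g` has the form `x^α - ∑_{β < α} c_β x^β` with all `β` strictly below `α` componentwise. -/
def HasLowerForm {F : Type*} [Field F] {d : ℕ} (g : MvPolynomial (Fin d) F)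
    (α : Fin d →₀ ℕ) : Prop :=
  ∃ (s : Finset (Fin d →₀ ℕ)) (c : (Fin d →₀ ℕ) → F),
    (∀ β ∈ s, β ≤ α ∧ β ≠ α) ∧ g = monomial α 1 - ∑ β ∈ s, monomial β (c β)

/-- `δ` is the leading exponent (exponent of the leading monomial) of `p` w.r.t. `m`. -/
def IsLeadExp {F : Type*} [Field F] {d : ℕ} (m : MonomialOrder (Fin d))
    (p : MvPolynomial (Fin d) F) (δ : Fin d →₀ ℕ) : Prop :=
  δ ∈ p.support ∧ ∀ β ∈ p.support, m.toSyn β ≤ m.toSyn δ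

/-- `G` is a Gröbner basis of `I` w.r.t. the monomial order `m`. -/
def IsGB {F : Type*} [Field F] {d : ℕ} (m : MonomialOrder (Fin d))
    (I : Ideal (MvPolynomial (Fin d) F)) (G : Set (MvPolynomial (Fin d) F)) : Prop :=
  G ⊆ (I : Set (MvPolynomial (Fin d) F)) ∧
    ∀ p ∈ I, p ≠ 0 → ∃ g ∈ G, ∃ δg δp, IsLeadExp m g δg ∧ IsLeadExp m p δp ∧ δg ≤ δp

/-- `G` is a reduced Gröbner basis of `I` w.r.t. `m`: a Gröbner basis of monic elements,
no term of any element being divisible by the leading monomial of another element. -/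
def IsReducedGB {F : Type*} [Field F] {d : ℕ} (m : MonomialOrder (Fin d))
    (I : Ideal (MvPolynomial (Fin d) F)) (G : Set (MvPolynomial (Fin d) F)) : Prop :=
  IsGB m I G ∧ ∀ g ∈ G, ∃ δ, IsLeadExp m g δ ∧ coeff δ g = 1 ∧
    ∀ g' ∈ G, g' ≠ g → ∀ β ∈ g.support, ∀ δ', IsLeadExp m g' δ' → ¬ δ' ≤ β

/-- The Gröbner éscalier associated to a (reduced) Gröbner basis `G`:
exponents of the monomials not divisible by any leading monomial of `G`. -/
def escalier {F : Type*} [Field F] {d : ℕ} (m : MonomialOrder (Fin d))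
    (G : Set (MvPolynomial (Fin d) F)) : Set (Fin d →₀ ℕ) :=
  {β | ∀ g ∈ G, ∀ δ, IsLeadExp m g δ → ¬ δ ≤ β}

/-- `α! = α₁!⋯α_d!`. -/
def nfact {d : ℕ} (α : Fin d →₀ ℕ) : ℕ := α.prod fun _ k => k.factorial

/-- The differential operator `D^α = ∂^{α₁}/∂x₁^{α₁} ⋯ ∂^{α_d}/∂x_d^{α_d}`. -/
noncomputable def Dpow (F : Type*) [Field F] {d : ℕ} (α : Fin d →₀ ℕ) :
    Module.End F (MvPolynomial (Fin d) F) :=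
  (List.ofFn fun i : Fin d =>
    ((MvPolynomial.pderiv i).toLinearMap : Module.End F (MvPolynomial (Fin d) F)) ^ α i).prod

-- degree monotonicity
lemma deg_mono {d : ℕ} {γ δ : Fin d →₀ ℕ} (h : γ ≤ δ) :
    (γ.sum fun _ k => k) ≤ (δ.sum fun _ k => k) := by
  rw [Finsupp.sum_fintype _ _ (fun _ => rfl), Finsupp.sum_fintype _ _ (fun _ => rfl)]
  exact Finset.sum_le_sum fun i _ => h i

lemma lower_form_support {F : Type*} [Field F] {d : ℕ} {g : MvPolynomial (Fin d) F}
    {α : Fin d →₀ ℕ} (hform : HasLowerForm g α) :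
    coeff α g = 1 ∧ ∀ β ∈ g.support, β ≤ α := by
  obtain ⟨s, c, hs, rfl⟩ := hform
  have hαs : α ∉ s := fun h => (hs α h).2 rfl
  constructor
  · rw [coeff_sub, coeff_monomial, if_pos rfl]
    rw [coeff_sum]
    rw [Finset.sum_eq_zero, sub_zero]
    intro β hβ
    rw [coeff_monomial, if_neg]
    intro h; exact hαs (h ▸ hβ)
  · intro β hβ
    rw [mem_support_iff, coeff_sub, coeff_monomial, coeff_sum] at hβ
    by_cases hβα : β = α
    · exact hβα.le
    · by_contra hle
      apply hβ
      rw [if_neg (fun h => hβα h.symm), zero_sub, neg_eq_zero]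
      apply Finset.sum_eq_zero
      intro β' hβ'
      rw [coeff_monomial, if_neg]
      rintro rfl
      exact hle (hs β' hβ').1

lemma key_lemma {F : Type*} [Field F] {d M : ℕ}
    (I : Ideal (MvPolynomial (Fin d) F))
    (g : Fin M → MvPolynomial (Fin d) F) (α : Fin M → (Fin d →₀ ℕ))
    (hform : ∀ j, HasLowerForm (g j) (α j))
    (m₀ : MonomialOrder (Fin d)) (hGB : IsReducedGB m₀ I (Set.range g))
    {r : ℕ} {βs : Fin d →₀ ℕ} (hβO : ∀ j, ¬ α j ≤ βs)
    (hβr : (βs.sum fun _ k => k) = r) :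
    ∀ q ∈ I, (∀ γ ∈ q.support, γ ≠ βs → (γ.sum fun _ k => k) < r) →
      coeff βs q = 0 := by
  suffices H : ∀ t : m₀.syn, ∀ q ∈ I, (∀ γ ∈ q.support, m₀.toSyn γ ≤ t) →
      (∀ γ ∈ q.support, γ ≠ βs → (γ.sum fun _ k => k) < r) → coeff βs q = 0 by
    intro q hq hdeg
    by_cases h0 : q = 0
    · simp [h0]
    · obtain ⟨δ, hδ, hmax⟩ :=
        Finset.exists_max_image q.support m₀.toSyn (support_nonempty.mpr h0)
      exact H (m₀.toSyn δ) q hq hmax hdeg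
  intro t
  induction t using WellFoundedLT.induction with
  | _ t IH =>
    intro q hq hbound hdeg
    by_contra hc
    have h0 : q ≠ 0 := fun h => hc (by simp [h])
    obtain ⟨g', hg', δg, δ, hlg, hlq, hle⟩ := hGB.1.2 q hq h0
    obtain ⟨j, rfl⟩ := hg'
    obtain ⟨hcoeff1, hsupg⟩ := lower_form_support (hform j)
    have hαmem : α j ∈ (g j).support := mem_support_iff.mpr (by rw [hcoeff1]; exact one_ne_zero)
    have hδgα : δg = α j := by
      have h1 : m₀.toSyn (α j) ≤ m₀.toSyn δg := hlg.2 _ hαmem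
      have h2 : m₀.toSyn δg ≤ m₀.toSyn (α j) := m₀.toSyn_monotone (hsupg _ hlg.1)
      exact m₀.toSyn.injective (le_antisymm h2 h1)
    have hαδ : α j ≤ δ := hδgα ▸ hle
    have hδβs : δ ≠ βs := fun h => hβO j (h ▸ hαδ)
    have hδr : (δ.sum fun _ k => k) < r := hdeg δ hlq.1 hδβs
    set h : MvPolynomial (Fin d) F := g j * monomial (δ - α j) (coeff δ q) with hh
    have hcoeffh : ∀ γ, coeff γ h =
        if δ - α j ≤ γ then coeff (γ - (δ - α j)) (g j) * coeff δ q else 0 := fun γ =>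
      coeff_mul_monomial' γ _ _ _
    have hhsub : ∀ γ, coeff γ h ≠ 0 → γ ≤ δ := by
      intro γ hγ
      rw [hcoeffh] at hγ
      split_ifs at hγ with hle'
      · have hmem : γ - (δ - α j) ∈ (g j).support := by
          rw [mem_support_iff]; intro h'; exact hγ (by rw [h', zero_mul])
        have h1 : γ - (δ - α j) ≤ α j := hsupg _ hmem
        calc γ = (δ - α j) + (γ - (δ - α j)) := (add_tsub_cancel_of_le hle').symm
        _ ≤ (δ - α j) + α j := add_le_add_right h1 _
        _ = δ := tsub_add_cancel_of_le hαδ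
      · exact absurd rfl hγ
    have hcoeffδh : coeff δ h = coeff δ q := by
      rw [hcoeffh, if_pos tsub_le_self, tsub_tsub_cancel_of_le hαδ, hcoeff1, one_mul]
    set q' : MvPolynomial (Fin d) F := q - h with hq'
    have hq'I : q' ∈ I := I.sub_mem hq (Ideal.mul_mem_right _ _ (hGB.1.1 ⟨j, rfl⟩))
    have hsupq' : ∀ γ ∈ q'.support, m₀.toSyn γ < m₀.toSyn δ := by
      intro γ hγ
      rw [mem_support_iff, hq', coeff_sub] at hγ
      have hγδ : γ ≠ δ := by
        rintro rfl; rw [hcoeffδh, sub_self] at hγ; exact hγ rfl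
      rcases ne_or_eq (coeff γ q) 0 with hq0 | hq0
      · exact lt_of_le_of_ne (hlq.2 γ (mem_support_iff.mpr hq0)) (fun h' =>
          hγδ (m₀.toSyn.injective h'))
      · have hh0 : coeff γ h ≠ 0 := by
          intro h'; rw [hq0, h', sub_zero] at hγ; exact hγ rfl
        exact lt_of_le_of_ne (m₀.toSyn_monotone (hhsub γ hh0)) (fun h' =>
          hγδ (m₀.toSyn.injective h'))
    have hdegh : ∀ γ, coeff γ h ≠ 0 → (γ.sum fun _ k => k) < r := fun γ hγ =>
      lt_of_le_of_lt (deg_mono (hhsub γ hγ)) hδr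
    have hβsh : coeff βs h = 0 := by
      by_contra h'
      exact absurd hβr (Nat.ne_of_lt (hdegh βs h'))
    have hβsq' : coeff βs q' = coeff βs q := by rw [hq', coeff_sub, hβsh, sub_zero]
    have hq'0 : q' ≠ 0 := by
      intro h'; rw [h'] at hβsq'; exact hc (by rw [← hβsq', coeff_zero])
    obtain ⟨δ', hδ'1, hδ'2⟩ :=
      Finset.exists_max_image q'.support m₀.toSyn (support_nonempty.mpr hq'0)
    have hlt : m₀.toSyn δ' < t := lt_of_lt_of_le (hsupq' δ' hδ'1) (hbound δ hlq.1)
    apply hc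
    rw [← hβsq']
    refine IH (m₀.toSyn δ') hlt q' hq'I hδ'2 ?_
    intro γ hγ hγβs
    rw [mem_support_iff, hq', coeff_sub] at hγ
    rcases ne_or_eq (coeff γ q) 0 with hq0 | hq0
    · exact hdeg γ (mem_support_iff.mpr hq0) hγβs
    · refine hdegh γ ?_
      intro h'; rw [hq0, h', sub_zero] at hγ; exact hγ rfl

/-- Minimal degree: with `O` the order ideal of standard monomials, `r` the maximal total
degree in `O` and `n = #O`, there is no `n`-dimensional subspace `V'` of `Π_{r-1}` with
`V' ∩ ker Λ = {0}` (where `ker Λ = ker P`); i.e. no interpolation space of smaller degree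
is poised for the interpolation conditions `Λ = (ker P)^⊥`. -/
theorem stmt13 {F : Type*} [Field F] [CharZero F] {d M : ℕ}
    (P : MvPolynomial (Fin d) F →ₗ[F] MvPolynomial (Fin d) F) (hP : P ∘ₗ P = P)
    (I : Ideal (MvPolynomial (Fin d) F)) (hker : ∀ f, P f = 0 ↔ f ∈ I)
    (g : Fin M → MvPolynomial (Fin d) F) (α : Fin M → (Fin d →₀ ℕ))
    (hform : ∀ j, HasLowerForm (g j) (α j))
    (m₀ : MonomialOrder (Fin d)) (hGB : IsReducedGB m₀ I (Set.range g))
    (O : Set (Fin d →₀ ℕ)) (hO : O = {β | ∀ j, ¬ α j ≤ β})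
    (hran : LinearMap.range P =
      Submodule.span F ((fun β => monomial β (1 : F)) '' O))
    (hOfin : O.Finite) (n : ℕ) (hn : n = hOfin.toFinset.card)
    (r : ℕ) (hr : ∀ β ∈ O, (β.sum fun _ k => k) ≤ r)
    (hrmax : ∃ β ∈ O, (β.sum fun _ k => k) = r) :
    ¬ ∃ V' : Submodule F (MvPolynomial (Fin d) F),
        (∀ f ∈ V', f ≠ 0 → f.totalDegree < r) ∧
        Module.finrank F V' = n ∧
        V' ⊓ LinearMap.ker P = ⊥ := by
  have KEY : ∀ βs ∈ O, (βs.sum fun _ k => k) = r →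
      ∀ q ∈ I, (∀ γ ∈ q.support, γ ≠ βs → (γ.sum fun _ k => k) < r) → coeff βs q = 0 := by
    intro βs hβsO hβsr
    have : βs ∈ {β | ∀ j, ¬ α j ≤ β} := hO ▸ hβsO
    exact key_lemma I g α hform m₀ hGB this hβsr
  rintro ⟨V', hdegV, hfr, hint⟩
  obtain ⟨βs, hβsO, hβsr⟩ := hrmax
  classical
  -- finite dimensionality of range P
  have hfinP : FiniteDimensional F (LinearMap.range P) := by
    rw [hran]; exact FiniteDimensional.span_of_finite _ (hOfin.image _)
  -- finrank of range P is n
  have hrankP : Module.finrank F (LinearMap.range P) = n := by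
    rw [hran, hn]
    have hb : LinearIndependent F (fun β : hOfin.toFinset => monomial (β : Fin d →₀ ℕ) (1 : F)) := by
      have := (basisMonomials (Fin d) F).linearIndependent
      rw [coe_basisMonomials] at this
      exact this.comp _ Subtype.val_injective
    have hset : ((fun β => monomial β (1:F)) '' O) =
        Set.range fun β : hOfin.toFinset => monomial (β : Fin d →₀ ℕ) (1:F) := by
      have h1 : (fun β => monomial β (1:F)) '' O =
          (fun β => monomial β (1:F)) '' ↑hOfin.toFinset := by rw [hOfin.coe_toFinset]
      exact h1.trans (Set.image_eq_range _ _)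
    have := finrank_span_eq_card (R := F) hb
    rw [Fintype.card_coe] at this
    have hspan : Submodule.span F ((fun β => monomial β (1:F)) '' O) =
        Submodule.span F (Set.range fun β : hOfin.toFinset => monomial (β : Fin d →₀ ℕ) (1:F)) := by
      rw [hset]
    rw [hspan, this]
  -- injectivity of P restricted to V'
  have hinj : Function.Injective (P.domRestrict V') := by
    rw [← LinearMap.ker_eq_bot]
    rw [Submodule.eq_bot_iff]
    rintro ⟨v, hv⟩ hvk
    have : v ∈ V' ⊓ LinearMap.ker P := ⟨hv, hvk⟩
    rw [hint] at this
    exact Subtype.ext this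
  -- V' is finite dimensional
  have hfinV' : FiniteDimensional F V' := by
    have : Function.Injective ((P.domRestrict V').codRestrict (LinearMap.range P)
        (fun v => ⟨v, rfl⟩)) := fun a b hab => hinj (Subtype.ext_iff.mp hab)
    exact FiniteDimensional.of_injective _ this
  -- map P V' = range P
  have hmapeq : Submodule.map P V' = LinearMap.range P := by
    refine Submodule.eq_of_le_of_finrank_le (le_trans (Submodule.map_mono le_top) (Submodule.map_top P).le) ?_
    rw [hrankP]
    have := LinearMap.finrank_range_of_inj hinj
    rw [LinearMap.range_domRestrict] at this
    rw [this, hfr]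
  -- get v
  have hmem : monomial βs (1 : F) ∈ Submodule.map P V' := by
    rw [hmapeq, hran]
    exact Submodule.subset_span ⟨βs, hβsO, rfl⟩
  obtain ⟨v, hvV, hPv⟩ := hmem
  have hPP : ∀ f, P (P f) = P f := fun f => LinearMap.ext_iff.mp hP f
  set q : MvPolynomial (Fin d) F := monomial βs 1 - v with hqdef
  have hqI : q ∈ I := by
    rw [← hker]
    rw [hqdef, map_sub, ← hPv, hPP, sub_self]
  have hv0 : v ≠ 0 := by
    rintro rfl
    rw [map_zero] at hPv
    have : coeff βs (monomial βs (1:F)) = 0 := by rw [← hPv, coeff_zero]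
    rw [coeff_monomial, if_pos rfl] at this
    exact one_ne_zero this
  have hvdeg : v.totalDegree < r := hdegV v hvV hv0
  have hvcoeff : ∀ γ, coeff γ v ≠ 0 → (γ.sum fun _ k => k) < r := fun γ hγ =>
    lt_of_le_of_lt (le_totalDegree (mem_support_iff.mpr hγ)) hvdeg
  have hdegq : ∀ γ ∈ q.support, γ ≠ βs → (γ.sum fun _ k => k) < r := by
    intro γ hγ hγβs
    rw [mem_support_iff, hqdef, coeff_sub, coeff_monomial, if_neg (fun h => hγβs h.symm),
      zero_sub, neg_ne_zero] at hγ
    exact hvcoeff γ hγ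
  have hcoeffq : coeff βs q = 1 := by
    rw [hqdef, coeff_sub, coeff_monomial, if_pos rfl]
    have : coeff βs v = 0 := by
      by_contra h'
      exact absurd hβsr (Nat.ne_of_lt (hvcoeff βs h'))
    rw [this, sub_zero]
  have := KEY βs hβsO hβsr q hqI hdegq
  rw [hcoeffq] at this
  exact one_ne_zero this
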